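/- Fix r > 0. Let H_{2,r} be the class of functions f : Σ* → ℝ whose Hankel operator H_f is Hilbert–Schmidt with ‖H_f‖_{HS} ≤ r. Then for any sample S = (x_1,…,x_m) of strings, the empirical Rademacher complexity of H_{2,r} on S is at most r/√m. -/

import Mathlib

open BigOperators

/-- Expectation over `m` i.i.d. Rademacher random variables. -/
noncomputable def radExp (m : ℕ) (F : (Fin m → ℝ) → ℝ) : ℝ :=
  (∑ ε : Fin m → Bool, F (fun i => if ε i then (1 : ℝ) else -1)) / 2 ^ m

section Aux
open Finset

lemma rad_orth (m : ℕ) (i j : Fin m) (hij : i ≠ j) :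
    ∑ ε : Fin m → Bool, ((if ε i then (1:ℝ) else -1) * (if ε j then (1:ℝ) else -1)) = 0 := by
  refine Finset.sum_involution (fun ε _ => Function.update ε i (!ε i)) ?_ ?_ (fun _ _ => mem_univ _) ?_
  · intro ε _
    have h1 : Function.update ε i (!ε i) i = !ε i := Function.update_self _ _ _
    have h2 : Function.update ε i (!ε i) j = ε j := Function.update_of_ne (Ne.symm hij) _ _
    show ((if ε i then (1:ℝ) else -1) * (if ε j then (1:ℝ) else -1)) + ((if Function.update ε i (!ε i) i then (1:ℝ) else -1) * (if Function.update ε i (!ε i) j then (1:ℝ) else -1)) = 0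
    rw [h1, h2]
    cases h : ε i <;> simp [h] <;> cases hj : ε j <;> simp [hj]
  · intro ε _ _ h
    have := congrFun h i
    simp at this
  · intro ε _
    funext k
    by_cases hk : k = i
    · subst hk; simp
    · simp [Function.update_of_ne hk]

lemma rad_orth' (m : ℕ) (i j : Fin m) :
    ∑ ε : Fin m → Bool, ((if ε i then (1:ℝ) else -1) * (if ε j then (1:ℝ) else -1)) =
      if i = j then (2:ℝ)^m else 0 := by
  by_cases h : i = j
  · subst h
    rw [if_pos rfl]
    have : ∀ ε : Fin m → Bool, ((if ε i then (1:ℝ) else -1) * (if ε i then (1:ℝ) else -1)) = 1 := by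
      intro ε; cases hε : ε i <;> simp [hε]
    rw [Finset.sum_congr rfl (fun ε _ => this ε), Finset.sum_const, Finset.card_univ]
    simp [Fintype.card_fun]
  · rw [if_neg h]; exact rad_orth m i j h

lemma rad_sq_sum (m : ℕ) (t : Finset (Fin m)) :
    ∑ ε : Fin m → Bool, (∑ i ∈ t, (if ε i then (1:ℝ) else -1))^2 = 2^m * t.card := by
  have : ∀ ε : Fin m → Bool, (∑ i ∈ t, (if ε i then (1:ℝ) else -1))^2 =
      ∑ i ∈ t, ∑ j ∈ t, ((if ε i then (1:ℝ) else -1) * (if ε j then (1:ℝ) else -1)) := by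
    intro ε; rw [sq, Finset.sum_mul_sum]
  rw [Finset.sum_congr rfl (fun ε _ => this ε), Finset.sum_comm]
  have : ∀ i ∈ t, (∑ ε : Fin m → Bool, ∑ j ∈ t,
      ((if ε i then (1:ℝ) else -1) * (if ε j then (1:ℝ) else -1))) = (2:ℝ)^m := by
    intro i hi
    rw [Finset.sum_comm]
    rw [Finset.sum_congr rfl (fun j _ => rad_orth' m i j)]
    rw [Finset.sum_ite_eq t i (fun _ => (2:ℝ)^m), if_pos hi]
  rw [Finset.sum_congr rfl this, Finset.sum_const, nsmul_eq_mul, mul_comm]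

end Aux

/-- Rademacher complexity bound for the class `H_{2,r}` of functions `f : Σ* → ℝ`
whose Hankel matrix `H_f(u,v) = f(uv)` is Hilbert–Schmidt with `‖H_f‖_HS ≤ r`:
the empirical Rademacher complexity on any sample of `m ≥ 1` strings is at most `r/√m`. -/
theorem rademacher_hankel_hs_bound (A : Type*) [Fintype A]
    (r : ℝ) (hr : 0 < r) (F : Set (List A → ℝ))
    (hF : ∀ f ∈ F, Summable (fun z : List A × List A => (f (z.1 ++ z.2)) ^ 2) ∧
      Real.sqrt (∑' z : List A × List A, (f (z.1 ++ z.2)) ^ 2) ≤ r)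
    (m : ℕ) (hm : 1 ≤ m) (x : Fin m → List A) :
    radExp m (fun σ => sSup {c | ∃ f ∈ F, c = (1 / m : ℝ) * ∑ i, σ i * f (x i)}) ≤
      r / Real.sqrt m := by
  classical
  have hm0 : (0:ℝ) < m := by exact_mod_cast hm
  set T : Finset (List A) := Finset.univ.image x with hT
  set w : (Fin m → ℝ) → List A → ℝ :=
    fun σ z => ∑ i ∈ Finset.univ.filter (fun i => x i = z), σ i with hw
  set Q : (Fin m → ℝ) → ℝ := fun σ => ∑ z ∈ T, (w σ z)^2 with hQ
  have hQnn : ∀ σ, 0 ≤ Q σ := fun σ => Finset.sum_nonneg fun _ _ => sq_nonneg _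
  -- Step A: pointwise bound on the supremum
  have stepA : ∀ σ : Fin m → ℝ,
      sSup {c | ∃ f ∈ F, c = (1 / m : ℝ) * ∑ i, σ i * f (x i)} ≤
        (1 / m : ℝ) * (r * Real.sqrt (Q σ)) := by
    intro σ
    apply Real.sSup_le
    · rintro c ⟨f, hf1, rfl⟩
      obtain ⟨hsum, hbound⟩ := hF f hf1
      have e1 : ∑ i, σ i * f (x i) = ∑ z ∈ T, (w σ z) * f z := by
        rw [← Finset.sum_fiberwise_of_maps_to
          (fun i _ => Finset.mem_image_of_mem x (Finset.mem_univ i))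
          (fun i => σ i * f (x i))]
        refine Finset.sum_congr rfl fun z hz => ?_
        rw [hw]
        rw [Finset.sum_mul]
        refine Finset.sum_congr rfl fun i hi => ?_
        rw [(Finset.mem_filter.mp hi).2]
      have h3 : ∑ z ∈ T, f z ^ 2 ≤ ∑' p : List A × List A, (f (p.1 ++ p.2))^2 := by
        have e2 : ∑ z ∈ T, f z ^ 2 = ∑ p ∈ T.map
            ⟨fun z => (z, ([] : List A)), fun a b h => congrArg Prod.fst h⟩,
            (f (p.1 ++ p.2))^2 := by
          rw [Finset.sum_map]
          refine Finset.sum_congr rfl fun z _ => ?_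
          show f z ^ 2 = (f (z ++ [])) ^ 2
          rw [List.append_nil]
        rw [e2]
        exact Summable.sum_le_tsum _ (fun _ _ => sq_nonneg _) hsum
      have h4 : Real.sqrt (∑ z ∈ T, f z ^ 2) ≤ r :=
        le_trans (Real.sqrt_le_sqrt h3) hbound
      have h2 := Finset.sum_mul_sq_le_sq_mul_sq T (w σ) (fun z => f z)
      have h5 : ∑ z ∈ T, w σ z * f z ≤ Real.sqrt (Q σ) * Real.sqrt (∑ z ∈ T, f z ^ 2) := by
        have := Real.sqrt_le_sqrt h2
        rw [Real.sqrt_mul (hQnn σ)] at this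
        calc ∑ z ∈ T, w σ z * f z ≤ |∑ z ∈ T, w σ z * f z| := le_abs_self _
          _ = Real.sqrt ((∑ z ∈ T, w σ z * f z)^2) := (Real.sqrt_sq_eq_abs _).symm
          _ ≤ Real.sqrt (Q σ) * Real.sqrt (∑ z ∈ T, f z ^ 2) := this
      have h6 : ∑ i, σ i * f (x i) ≤ r * Real.sqrt (Q σ) := by
        rw [e1]
        calc ∑ z ∈ T, w σ z * f z ≤ Real.sqrt (Q σ) * Real.sqrt (∑ z ∈ T, f z ^ 2) := h5
          _ ≤ Real.sqrt (Q σ) * r :=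
            mul_le_mul_of_nonneg_left h4 (Real.sqrt_nonneg _)
          _ = r * Real.sqrt (Q σ) := mul_comm _ _
      exact mul_le_mul_of_nonneg_left h6 (by positivity)
    · positivity
  -- Step B: second moment
  have stepB : ∑ ε : Fin m → Bool, Q (fun i => if ε i then (1:ℝ) else -1) = 2^m * m := by
    rw [Finset.sum_comm]
    have : ∀ z ∈ T, (∑ ε : Fin m → Bool, (w (fun i => if ε i then (1:ℝ) else -1) z)^2) =
        2^m * (Finset.univ.filter (fun i => x i = z)).card := by
      intro z _
      exact rad_sq_sum m (Finset.univ.filter (fun i => x i = z))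
    rw [Finset.sum_congr rfl this, ← Finset.mul_sum]
    congr 1
    have := Finset.card_eq_sum_card_fiberwise
      (fun i (_ : i ∈ (Finset.univ : Finset (Fin m))) =>
        Finset.mem_image_of_mem x (Finset.mem_univ i))
    rw [Finset.card_univ, Fintype.card_fin] at this
    exact_mod_cast (congrArg (Nat.cast : ℕ → ℝ) this).symm
  -- Step C: first moment bound
  have stepC : ∑ ε : Fin m → Bool, Real.sqrt (Q (fun i => if ε i then (1:ℝ) else -1)) ≤
      2^m * Real.sqrt m := by
    have cs := Finset.sum_mul_sq_le_sq_mul_sq Finset.univ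
      (fun ε : Fin m → Bool => Real.sqrt (Q (fun i => if ε i then (1:ℝ) else -1)))
      (fun _ => (1:ℝ))
    simp only [mul_one, one_pow, Finset.sum_const, Finset.card_univ, Fintype.card_fun,
      Fintype.card_bool, Fintype.card_fin, nsmul_eq_mul] at cs
    push_cast at cs
    have hsq : ∀ ε : Fin m → Bool,
        (Real.sqrt (Q (fun i => if ε i then (1:ℝ) else -1)))^2 =
          Q (fun i => if ε i then (1:ℝ) else -1) := fun ε => Real.sq_sqrt (hQnn _)
    rw [Finset.sum_congr rfl (fun ε _ => hsq ε), stepB] at cs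
    have hnn : (0:ℝ) ≤ ∑ ε : Fin m → Bool,
        Real.sqrt (Q (fun i => if ε i then (1:ℝ) else -1)) :=
      Finset.sum_nonneg fun _ _ => Real.sqrt_nonneg _
    calc (∑ ε : Fin m → Bool, Real.sqrt (Q (fun i => if ε i then (1:ℝ) else -1)))
        = Real.sqrt ((∑ ε : Fin m → Bool,
            Real.sqrt (Q (fun i => if ε i then (1:ℝ) else -1)))^2) :=
          (Real.sqrt_sq hnn).symm
      _ ≤ Real.sqrt (2^m * m * 2^m) := Real.sqrt_le_sqrt cs
      _ = 2^m * Real.sqrt m := by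
          rw [show (2:ℝ)^m * m * 2^m = ((2:ℝ)^m)^2 * m by ring,
            Real.sqrt_mul (sq_nonneg _), Real.sqrt_sq (by positivity)]
  -- Conclusion
  have main : radExp m (fun σ => sSup {c | ∃ f ∈ F, c = (1 / m : ℝ) * ∑ i, σ i * f (x i)}) ≤
      ((1 / m : ℝ) * r) * ((∑ ε : Fin m → Bool,
        Real.sqrt (Q (fun i => if ε i then (1:ℝ) else -1))) / 2^m) := by
    rw [radExp, mul_div_assoc']
    apply div_le_div_of_nonneg_right ?_ (by positivity)
    · rw [Finset.mul_sum]
      refine Finset.sum_le_sum fun ε _ => ?_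
      have := stepA (fun i => if ε i then (1:ℝ) else -1)
      calc sSup {c | ∃ f ∈ F, c = (1 / m : ℝ) * ∑ i,
            (if ε i then (1:ℝ) else -1) * f (x i)} ≤
          (1 / m : ℝ) * (r * Real.sqrt (Q (fun i => if ε i then (1:ℝ) else -1))) := this
        _ = (1 / m : ℝ) * r * Real.sqrt (Q (fun i => if ε i then (1:ℝ) else -1)) := by ring
  refine le_trans main ?_
  have h7 : ((∑ ε : Fin m → Bool,
      Real.sqrt (Q (fun i => if ε i then (1:ℝ) else -1))) / 2^m) ≤ Real.sqrt m := by
    rw [div_le_iff₀ (by positivity)]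
    calc _ ≤ (2:ℝ)^m * Real.sqrt m := stepC
      _ = Real.sqrt m * 2^m := mul_comm _ _
  calc ((1 / m : ℝ) * r) * ((∑ ε : Fin m → Bool,
        Real.sqrt (Q (fun i => if ε i then (1:ℝ) else -1))) / 2^m)
      ≤ ((1 / m : ℝ) * r) * Real.sqrt m := by
        apply mul_le_mul_of_nonneg_left h7 (by positivity)
    _ = r / Real.sqrt m := by
        have hs2 : Real.sqrt m * Real.sqrt m = (m : ℝ) := Real.mul_self_sqrt hm0.le
        rw [eq_div_iff (ne_of_gt (Real.sqrt_pos.mpr hm0)), mul_assoc, hs2]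
        field_simp
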